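/- Let n ≥ 4 and let x: A[Ã_n] → Z be the homomorphism sending every generator t_i to 1. Then for the endomorphism α_p of A[Ã_n], one has x(α_p(t_1)) = 1 + p·n(n+1). Consequently, if ψ, ψ' are automorphisms of A[Ã_n] each of which sends every generator to a conjugate of a generator or the inverse of a generator, and ψ ∘ α_p = ψ' ∘ α_q, then p = q. -/

import Mathlib

open FreeGroup in
/-- Defining relations of the Artin group of affine type `Ã n` (`n ≥ 2`):
generators `t i` indexed by `ZMod (n+1)`, braid relations between cyclically
adjacent generators and commuting relations otherwise. -/
def ArtinAffineARels (n : ℕ) : Set (FreeGroup (ZMod (n + 1))) :=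
  {w | ∃ i j : ZMod (n + 1),
    (j = i + 1 ∧ w = of i * of j * of i * (of j * of i * of j)⁻¹) ∨
    (i ≠ j ∧ j ≠ i + 1 ∧ i ≠ j + 1 ∧ w = of i * of j * (of j * of i)⁻¹)}

/-- The Artin group of affine type `Ã n`. -/
def ArtinAffineA (n : ℕ) : Type := PresentedGroup (ArtinAffineARels n)

instance (n : ℕ) : Group (ArtinAffineA n) :=
  inferInstanceAs (Group (PresentedGroup (ArtinAffineARels n)))

/-- The standard generator `t i` of `A[Ã n]`. -/
def tA (n : ℕ) (i : ZMod (n + 1)) : ArtinAffineA n := PresentedGroup.of i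

/-- `t₁ t₂ ⋯ t_{n-1}` in `A[Ã n]`. -/
def wpos (n : ℕ) : ArtinAffineA n :=
  ((List.range (n - 1)).map (fun k => tA n ((k + 1 : ℕ) : ZMod (n + 1)))).prod

/-- `t₁⁻¹ t₂⁻¹ ⋯ t_{n-1}⁻¹` in `A[Ã n]`. -/
def wneg (n : ℕ) : ArtinAffineA n :=
  ((List.range (n - 1)).map (fun k => (tA n ((k + 1 : ℕ) : ZMod (n + 1)))⁻¹)).prod

/-- `v₀ = t₁ ⋯ t_{n-1} tₙ t_{n-1}⁻¹ ⋯ t₁⁻¹` in `A[Ã n]`. -/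
def vZero (n : ℕ) : ArtinAffineA n :=
  wpos n * tA n ((n : ℕ) : ZMod (n + 1)) * (wpos n)⁻¹

/-- `v₁ = t₁⁻¹ ⋯ t_{n-1}⁻¹ tₙ t_{n-1} ⋯ t₁` in `A[Ã n]`. -/
def vOne (n : ℕ) : ArtinAffineA n :=
  wneg n * tA n ((n : ℕ) : ZMod (n + 1)) * (wneg n)⁻¹

/-- The Garside element `Δ_Y` of the standard parabolic subgroup of `A[Ã n]`
generated by `Y = {t₁, …, tₙ}` (which is isomorphic to `A[A n]`). -/
def deltaY (n : ℕ) : ArtinAffineA n :=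
  ((List.range n).reverse.map
    (fun k => ((List.range (k + 1)).map
      (fun i => tA n ((i + 1 : ℕ) : ZMod (n + 1)))).prod)).prod


lemma braidA (n : ℕ) (i : ZMod (n + 1)) :
    tA n i * tA n (i+1) * tA n i = tA n (i+1) * tA n i * tA n (i+1) := by
  have hr : (FreeGroup.of i * FreeGroup.of (i+1) * FreeGroup.of i *
      (FreeGroup.of (i+1) * FreeGroup.of i * FreeGroup.of (i+1))⁻¹) ∈ ArtinAffineARels n :=
    ⟨i, i+1, Or.inl ⟨rfl, rfl⟩⟩
  have h1 : PresentedGroup.mk (ArtinAffineARels n)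
      (FreeGroup.of i * FreeGroup.of (i+1) * FreeGroup.of i *
      (FreeGroup.of (i+1) * FreeGroup.of i * FreeGroup.of (i+1))⁻¹) = 1 :=
    (QuotientGroup.eq_one_iff _).mpr (Subgroup.subset_normalClosure hr)
  rw [map_mul, map_inv] at h1
  have h2 := mul_inv_eq_one.mp h1
  simp only [tA, PresentedGroup.of]
  exact h2

lemma const_on_gens (n : ℕ) (y : ArtinAffineA n →* Multiplicative ℤ) (i : ZMod (n + 1)) :
    y (tA n i) = y (tA n 0) := by
  have step : ∀ j : ZMod (n + 1), y (tA n (j + 1)) = y (tA n j) := by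
    intro j
    have h := congrArg y (braidA n j)
    simp only [map_mul] at h
    have h2 := congrArg Multiplicative.toAdd h
    simp only [toAdd_mul] at h2
    have h3 : Multiplicative.toAdd (y (tA n (j+1))) = Multiplicative.toAdd (y (tA n j)) := by
      omega
    exact Multiplicative.toAdd.injective h3
  have key : ∀ k : ℕ, y (tA n ((k : ℕ) : ZMod (n+1))) = y (tA n 0) := by
    intro k
    induction k with
    | zero => norm_num
    | succ m ih =>
      have hc : ((m+1 : ℕ) : ZMod (n+1)) = ((m : ℕ) : ZMod (n+1)) + 1 := by push_cast; ring
      rw [hc, step, ih]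
  have hi : ((i.val : ℕ) : ZMod (n+1)) = i := ZMod.natCast_rightInverse i
  rw [← hi, key]

lemma toAdd_listprod (l : List (Multiplicative ℤ)) :
    Multiplicative.toAdd l.prod = (l.map Multiplicative.toAdd).sum := by
  induction l with
  | nil => rfl
  | cons a t ih => simp only [List.prod_cons, List.map_cons, List.sum_cons, toAdd_mul, ih]

lemma sum_range_aux (n : ℕ) :
    (((List.range n).map (fun k : ℕ => ((k:ℤ) + 1))).sum) * 2 = n * (n+1) := by
  induction n with
  | zero => simp
  | succ m ih =>
    rw [List.range_succ, List.map_append, List.sum_append]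
    simp only [List.map_cons, List.map_nil, List.sum_cons, List.sum_nil, add_zero,
      Nat.cast_add, Nat.cast_one]
    linarith

lemma list_sum_mul (l : List ℕ) (f : ℕ → ℤ) (c : ℤ) :
    (l.map (fun k => f k * c)).sum = (l.map f).sum * c := by
  induction l with
  | nil => simp
  | cons a t ih => simp [ih, add_mul]

lemma toAdd_delta (n : ℕ) (y : ArtinAffineA n →* Multiplicative ℤ) (c : ℤ)
    (hy : ∀ i : ZMod (n+1), y (tA n i) = Multiplicative.ofAdd c) :
    Multiplicative.toAdd (y (deltaY n)) * 2 = c * (n * (n + 1)) := by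
  have hinner : ∀ k : ℕ,
      Multiplicative.toAdd (y (((List.range (k + 1)).map
          (fun i => tA n ((i + 1 : ℕ) : ZMod (n + 1)))).prod))
        = ((k:ℤ) + 1) * c := by
    intro k
    rw [map_list_prod, List.map_map, toAdd_listprod, List.map_map]
    have hf : (Multiplicative.toAdd ∘ ⇑y ∘ fun i : ℕ => tA n ((i + 1 : ℕ) : ZMod (n + 1)))
        = fun _ : ℕ => c := by
      funext i
      simp only [Function.comp_apply]
      rw [hy]
      rfl
    rw [hf, List.map_const', List.sum_replicate, List.length_range, nsmul_eq_mul]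
    push_cast
    ring
  unfold deltaY
  rw [map_list_prod, List.map_map, toAdd_listprod, List.map_map]
  have hfun : (Multiplicative.toAdd ∘ ⇑y ∘ fun k : ℕ =>
      ((List.range (k + 1)).map (fun i => tA n ((i + 1 : ℕ) : ZMod (n + 1)))).prod)
      = fun k : ℕ => ((k:ℤ) + 1) * c := funext fun k => hinner k
  rw [hfun]
  have hrev : (List.map (fun k : ℕ => ((k:ℤ) + 1) * c) (List.range n).reverse).sum
      = (List.map (fun k : ℕ => ((k:ℤ) + 1) * c) (List.range n)).sum := by
    rw [List.map_reverse, List.sum_reverse]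
  rw [hrev]
  have hmul : (List.map (fun k : ℕ => ((k:ℤ) + 1) * c) (List.range n)).sum
      = (((List.range n).map (fun k : ℕ => ((k:ℤ) + 1))).sum) * c := by
    exact list_sum_mul _ _ _
  rw [hmul]
  have hS := sum_range_aux n
  calc (((List.range n).map (fun k : ℕ => ((k:ℤ) + 1))).sum) * c * 2
      = (((List.range n).map (fun k : ℕ => ((k:ℤ) + 1))).sum * 2) * c := by ring
    _ = (n * (n+1)) * c := by rw [hS]
    _ = c * (n * (n + 1)) := by ring

lemma key_val (n : ℕ) (y : ArtinAffineA n →* Multiplicative ℤ) (c : ℤ)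
    (hy : ∀ i : ZMod (n+1), y (tA n i) = Multiplicative.ofAdd c) (p : ℤ) (i : ZMod (n+1)) :
    Multiplicative.toAdd (y (tA n i * deltaY n ^ (2*p))) = c + p * c * (n * (n + 1)) := by
  rw [map_mul, map_zpow, toAdd_mul, Int.toAdd_zpow, hy]
  have hD := toAdd_delta n y c hy
  have h2 : Multiplicative.toAdd (y (deltaY n)) * (2*p)
      = (Multiplicative.toAdd (y (deltaY n)) * 2) * p := by ring
  rw [h2, hD]
  simp only [toAdd_ofAdd]
  ring

lemma hom_val_gen (n : ℕ) (x : ArtinAffineA n →* Multiplicative ℤ)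
    (hx : ∀ i : ZMod (n + 1), x (tA n i) = Multiplicative.ofAdd 1)
    (ψ : MulAut (ArtinAffineA n))
    (g : ArtinAffineA n) (j : ZMod (n+1)) (ε : ℤ)
    (hval : ψ (tA n 0) = g * tA n j ^ ε * g⁻¹) :
    ∀ i : ZMod (n+1), (x.comp ψ.toMonoidHom) (tA n i) = Multiplicative.ofAdd ε := by
  intro i
  have hc0 : (x.comp ψ.toMonoidHom) (tA n 0) = Multiplicative.ofAdd ε := by
    apply Multiplicative.toAdd.injective
    simp only [MonoidHom.comp_apply, MulEquiv.coe_toMonoidHom, hval, map_mul, map_inv,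
      map_zpow, hx, toAdd_mul, toAdd_inv, Int.toAdd_zpow, toAdd_ofAdd]
    ring
  rw [const_on_gens n _ i, hc0]


/-- If `x : A[Ã n] → ℤ` sends every generator to `1`, then
`x (α_p t₁) = 1 + p·n(n+1)`; consequently if `ψ, ψ'` are automorphisms each
sending every generator to a conjugate of a generator or of an inverse of a
generator, and `ψ ∘ α_p = ψ' ∘ α_q`, then `p = q`. -/
theorem stmt16 (n : ℕ) (hn : 4 ≤ n)
    (x : ArtinAffineA n →* Multiplicative ℤ)
    (hx : ∀ i : ZMod (n + 1), x (tA n i) = Multiplicative.ofAdd 1)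
    (p q : ℤ) (α β : ArtinAffineA n →* ArtinAffineA n)
    (hα₁ : ∀ i : ℕ, 1 ≤ i → i ≤ n →
      α (tA n (i : ZMod (n + 1))) = tA n (i : ZMod (n + 1)) * deltaY n ^ (2 * p))
    (hα₀ : α (tA n 0) = vZero n * deltaY n ^ (2 * p))
    (hβ₁ : ∀ i : ℕ, 1 ≤ i → i ≤ n →
      β (tA n (i : ZMod (n + 1))) = tA n (i : ZMod (n + 1)) * deltaY n ^ (2 * q))
    (hβ₀ : β (tA n 0) = vZero n * deltaY n ^ (2 * q)) :
    x (α (tA n ((1 : ℕ) : ZMod (n + 1)))) =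
      Multiplicative.ofAdd (1 + p * (n : ℤ) * ((n : ℤ) + 1)) ∧
    (∀ ψ ψ' : MulAut (ArtinAffineA n),
      (∀ i : ZMod (n + 1), ∃ (g : ArtinAffineA n) (j : ZMod (n + 1)) (ε : ℤ),
        (ε = 1 ∨ ε = -1) ∧ ψ (tA n i) = g * tA n j ^ ε * g⁻¹) →
      (∀ i : ZMod (n + 1), ∃ (g : ArtinAffineA n) (j : ZMod (n + 1)) (ε : ℤ),
        (ε = 1 ∨ ε = -1) ∧ ψ' (tA n i) = g * tA n j ^ ε * g⁻¹) →
      (∀ a : ArtinAffineA n, ψ (α a) = ψ' (β a)) → p = q) := by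
  have h1n : (1:ℕ) ≤ n := by omega
  have ht1 := hα₁ 1 le_rfl h1n
  constructor
  · rw [ht1]
    apply Multiplicative.toAdd.injective
    rw [key_val n x 1 hx p _]
    simp only [toAdd_ofAdd]
    ring
  · intro ψ ψ' hψ hψ' hcomm
    obtain ⟨g, j, ε, hε, hval⟩ := hψ 0
    obtain ⟨g', j', ε', hε', hval'⟩ := hψ' 0
    set y := x.comp ψ.toMonoidHom with hy_def
    set y' := x.comp ψ'.toMonoidHom with hy'_def
    have hyc : ∀ i : ZMod (n+1), y (tA n i) = Multiplicative.ofAdd ε :=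
      hom_val_gen n x hx ψ g j ε hval
    have hyc' : ∀ i : ZMod (n+1), y' (tA n i) = Multiplicative.ofAdd ε' :=
      hom_val_gen n x hx ψ' g' j' ε' hval'
    have hkey : y (α (tA n ((1:ℕ) : ZMod (n+1)))) = y' (β (tA n ((1:ℕ) : ZMod (n+1)))) := by
      simp only [hy_def, hy'_def, MonoidHom.comp_apply, MulEquiv.coe_toMonoidHom]
      exact congrArg x (hcomm _)
    rw [ht1, hβ₁ 1 le_rfl h1n] at hkey
    have heq := congrArg Multiplicative.toAdd hkey
    rw [key_val n y ε hyc p, key_val n y' ε' hyc' q] at heq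
    set N : ℤ := (n:ℤ) * ((n:ℤ) + 1) with hN_def
    have hN : (20:ℤ) ≤ N := by
      have : (4:ℤ) ≤ (n:ℤ) := by exact_mod_cast hn
      nlinarith
    rcases hε with rfl | rfl <;> rcases hε' with rfl | rfl
    · have h0 : (p - q) * N = 0 := by linear_combination heq
      rcases mul_eq_zero.mp h0 with h | h
      · linarith
      · linarith
    · exfalso
      have h0 : N * (-(p + q)) = 2 := by linear_combination -heq
      have := Int.le_of_dvd (by norm_num) ⟨-(p+q), h0.symm⟩
      linarith
    · exfalso
      have h0 : N * (-(p + q)) = 2 := by linear_combination heq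
      have := Int.le_of_dvd (by norm_num) ⟨-(p+q), h0.symm⟩
      linarith
    · have h0 : (p - q) * N = 0 := by linear_combination -heq
      rcases mul_eq_zero.mp h0 with h | h
      · linarith
      · linarith
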